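/- The Chase Rule is sound: if a team X satisfies the conditional independence atom y⃗ ⊥_{x⃗} z⃗ and the inclusion atoms a⃗b⃗ ⊆ x⃗y⃗ and a⃗c⃗ ⊆ x⃗z⃗, then X satisfies the inclusion atom a⃗b⃗c⃗ ⊆ x⃗y⃗z⃗. -/
import Mathlib


/-- A team is a set of assignments; the inclusion atom `x ⊆ y` holds in team `X`
iff for every `s ∈ X` there is `s' ∈ X` with `s(x) = s'(y)` componentwise. -/
def InclAtom {M Var : Type*} {n : ℕ} (X : Set (Var → M)) (x y : Fin n → Var) : Prop :=
  ∀ s ∈ X, ∃ s' ∈ X, ∀ i, s (x i) = s' (y i)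

/-- The conditional independence atom `y ⊥_x z` holds in team `X` iff for all
`s, s' ∈ X` agreeing on `x` there is `s'' ∈ X` with `s''(x) = s(x)`,
`s''(y) = s(y)` and `s''(z) = s'(z)`. -/
def IndepAtom {M Var : Type*} {k m n : ℕ} (X : Set (Var → M)) (x : Fin k → Var)
    (y : Fin m → Var) (z : Fin n → Var) : Prop :=
  ∀ s ∈ X, ∀ s' ∈ X, (∀ i, s (x i) = s' (x i)) →
    ∃ s'' ∈ X, (∀ i, s'' (x i) = s (x i)) ∧ (∀ i, s'' (y i) = s (y i)) ∧
      (∀ i, s'' (z i) = s' (z i))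

/-- The Chase Rule is sound: from y⃗ ⊥_{x⃗} z⃗, a⃗b⃗ ⊆ x⃗y⃗ and a⃗c⃗ ⊆ x⃗z⃗
one obtains a⃗b⃗c⃗ ⊆ x⃗y⃗z⃗. -/
theorem chase_rule {M Var : Type*} {k m n : ℕ} (X : Set (Var → M))
    (x a : Fin k → Var) (y b : Fin m → Var) (z c : Fin n → Var)
    (hind : IndepAtom X x y z)
    (hab : InclAtom X (Fin.append a b) (Fin.append x y))
    (hac : InclAtom X (Fin.append a c) (Fin.append x z)) :
    InclAtom X (Fin.append (Fin.append a b) c) (Fin.append (Fin.append x y) z) := by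
  intro s hs
  obtain ⟨s1, hs1, h1⟩ := hab s hs
  obtain ⟨s2, hs2, h2⟩ := hac s hs
  have hx1 : ∀ i : Fin k, s (a i) = s1 (x i) := by
    intro i
    have := h1 (Fin.castAdd m i)
    simpa [Fin.append_left] using this
  have hy1 : ∀ i : Fin m, s (b i) = s1 (y i) := by
    intro i
    have := h1 (Fin.natAdd k i)
    simpa [Fin.append_right] using this
  have hx2 : ∀ i : Fin k, s (a i) = s2 (x i) := by
    intro i
    have := h2 (Fin.castAdd n i)
    simpa [Fin.append_left] using this
  have hz2 : ∀ i : Fin n, s (c i) = s2 (z i) := by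
    intro i
    have := h2 (Fin.natAdd k i)
    simpa [Fin.append_right] using this
  obtain ⟨t, ht, htx, hty, htz⟩ := hind s1 hs1 s2 hs2 (fun i => by rw [← hx1 i, hx2 i])
  refine ⟨t, ht, fun i => ?_⟩
  refine Fin.addCases (fun i => ?_) (fun i => ?_) i
  · refine Fin.addCases (fun i => ?_) (fun i => ?_) i
    · simp [Fin.append_left, hx1 i, htx i]
    · simp [Fin.append_left, Fin.append_right, hy1 i, hty i]
  · simp [Fin.append_right, hz2 i, htz i]
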